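/- Lipschitz constant of homogeneous dot-product kernel mappings (general case). Let P be a real inner product space and let κ(t) = Σ_{j≥0} b_j t^j with b_j ≥ 0 for all j, Σ_j b_j < ∞ and Σ_j j b_j < ∞, normalized so that κ(1) = 1 (but with κ'(1) arbitrary). Define the homogeneous dot-product kernel K(z, z') = ‖z‖ ‖z'‖ κ(⟨z, z'⟩ / (‖z‖ ‖z'‖)) for z, z' ≠ 0 and K(z, z') = 0 if z = 0 or z' = 0. Then for all z, z' ∈ P: K(z, z) + K(z', z') − 2 K(z, z') ≤ ρ² ‖z − z'‖², where ρ = max(1, √κ'(1)) and κ'(1) = Σ_j j b_j; equivalently, any kernel feature map of K is ρ-Lipschitz. -/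

import Mathlib

open scoped RealInnerProductSpace Classical

/-- The homogeneous dot-product kernel `K(z,z') = ‖z‖‖z'‖ κ(⟨z,z'⟩/(‖z‖‖z'‖))`
for `z, z' ≠ 0`, and `0` if `z = 0` or `z' = 0`, where `κ(t) = ∑ b_j t^j`. -/
noncomputable def hdpKernel {P : Type*} [NormedAddCommGroup P] [InnerProductSpace ℝ P]
    (b : ℕ → ℝ) (z z' : P) : ℝ :=
  if z = 0 ∨ z' = 0 then 0
  else ‖z‖ * ‖z'‖ * ∑' j : ℕ, b j * (⟪z, z'⟫ / (‖z‖ * ‖z'‖)) ^ j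

lemma one_sub_pow_le_aux (t : ℝ) (ht : |t| ≤ 1) : ∀ j : ℕ, 1 - t ^ j ≤ j * (1 - t) := by
  intro j
  induction j with
  | zero => simp
  | succ n ih =>
    have h1 : t ^ n ≤ 1 :=
      le_trans (le_abs_self _) (by rw [abs_pow]; exact pow_le_one₀ (abs_nonneg t) ht)
    have ht1 : t ≤ 1 := (abs_le.1 ht).2
    have hp : 0 ≤ (1 - t) * (1 - t ^ n) := mul_nonneg (by linarith) (by linarith)
    have hs : t ^ (n + 1) = t ^ n * t := pow_succ t n
    push_cast
    nlinarith [ih]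

/-- Lipschitz constant of homogeneous dot-product kernel mappings (general case):
if `κ(1) = 1`, then `K(z,z) + K(z',z') − 2K(z,z') ≤ ρ² ‖z − z'‖²` with
`ρ = max(1, √κ'(1))`, `κ'(1) = ∑ j b_j`. -/
theorem stmt_6 {P : Type*} [NormedAddCommGroup P] [InnerProductSpace ℝ P]
    (b : ℕ → ℝ) (hb : ∀ j, 0 ≤ b j)
    (hsum : Summable b) (hsum' : Summable fun j : ℕ => (j : ℝ) * b j)
    (hone : (∑' j, b j) = 1) :
    ∀ z z' : P,
      hdpKernel b z z + hdpKernel b z' z' - 2 * hdpKernel b z z' ≤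
        (max 1 (Real.sqrt (∑' j : ℕ, (j : ℝ) * b j))) ^ 2 * ‖z - z'‖ ^ 2 := by
  intro z z'
  set L := ∑' j : ℕ, (j : ℝ) * b j with hL
  have hL0 : 0 ≤ L := tsum_nonneg fun j => mul_nonneg (Nat.cast_nonneg j) (hb j)
  set ρ2 := (max 1 (Real.sqrt L)) ^ 2 with hρ
  have hρ1 : (1 : ℝ) ≤ ρ2 := by
    have h := le_max_left 1 (Real.sqrt L)
    nlinarith
  have hρL : L ≤ ρ2 := by
    have h1 := le_max_right 1 (Real.sqrt L)
    have h2 : Real.sqrt L ^ 2 = L := Real.sq_sqrt hL0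
    nlinarith [Real.sqrt_nonneg L]
  have keyself : ∀ w : P, w ≠ 0 → hdpKernel b w w = ‖w‖ ^ 2 := by
    intro w hw
    simp only [hdpKernel, hw, or_self, if_false]
    rw [real_inner_self_eq_norm_mul_norm, div_self (mul_ne_zero (norm_ne_zero_iff.2 hw) (norm_ne_zero_iff.2 hw))]
    simp only [one_pow, mul_one, hone]
    ring
  by_cases hz : z = 0
  · subst hz
    by_cases hz' : z' = 0
    · subst hz'; simp [hdpKernel]
    · have h1 : hdpKernel b (0 : P) (0 : P) = 0 := by simp [hdpKernel]
      have h2 : hdpKernel b (0 : P) z' = 0 := by simp [hdpKernel]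
      rw [h1, h2, keyself z' hz']
      have : ‖(0 : P) - z'‖ = ‖z'‖ := by simp
      rw [this]
      nlinarith [sq_nonneg ‖z'‖]
  · by_cases hz' : z' = 0
    · have h1 : hdpKernel b z' z' = 0 := by simp [hdpKernel, hz']
      have h2 : hdpKernel b z z' = 0 := by simp [hdpKernel, hz']
      rw [h1, h2, keyself z hz]
      have : ‖z - z'‖ = ‖z‖ := by simp [hz']
      rw [this]
      nlinarith [sq_nonneg ‖z‖]
    · -- main case
      have ha : (0 : ℝ) < ‖z‖ := norm_pos_iff.2 hz
      have hc : (0 : ℝ) < ‖z'‖ := norm_pos_iff.2 hz'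
      set t : ℝ := ⟪z, z'⟫ / (‖z‖ * ‖z'‖) with htdef
      have ht : |t| ≤ 1 := abs_real_inner_div_norm_mul_norm_le_one z z'
      have ht1 : t ≤ 1 := (abs_le.1 ht).2
      have S1 : Summable fun j : ℕ => b j * t ^ j := by
        apply Summable.of_norm_bounded hsum
        intro j
        rw [Real.norm_eq_abs, abs_mul, abs_of_nonneg (hb j), abs_pow]
        calc b j * |t| ^ j ≤ b j * 1 :=
              mul_le_mul_of_nonneg_left (pow_le_one₀ (abs_nonneg t) ht) (hb j)
          _ = b j := mul_one _
      set κ := ∑' j : ℕ, b j * t ^ j with hκdef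
      have hκ1 : κ ≤ 1 := by
        rw [hκdef, ← hone]
        apply Summable.tsum_le_tsum _ S1 hsum
        intro j
        have hpj : t ^ j ≤ 1 :=
          le_trans (le_abs_self _) (by rw [abs_pow]; exact pow_le_one₀ (abs_nonneg t) ht)
        calc b j * t ^ j ≤ b j * 1 := mul_le_mul_of_nonneg_left hpj (hb j)
          _ = b j := mul_one _
      have hκ2 : 1 - κ ≤ L * (1 - t) := by
        have hdiff : 1 - κ = ∑' j : ℕ, (b j - b j * t ^ j) := by
          rw [Summable.tsum_sub hsum S1, hone]
        rw [hdiff]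
        have hRsum : Summable fun j : ℕ => (1 - t) * ((j : ℝ) * b j) := hsum'.mul_left _
        have hbound : ∀ j : ℕ, b j - b j * t ^ j ≤ (1 - t) * ((j : ℝ) * b j) := by
          intro j
          have := one_sub_pow_le_aux t ht j
          nlinarith [hb j]
        calc (∑' j : ℕ, (b j - b j * t ^ j)) ≤ ∑' j : ℕ, (1 - t) * ((j : ℝ) * b j) :=
              Summable.tsum_le_tsum hbound (hsum.sub S1) hRsum
          _ = (1 - t) * L := by rw [tsum_mul_left]
          _ = L * (1 - t) := mul_comm _ _
      have hK : hdpKernel b z z' = ‖z‖ * ‖z'‖ * κ := by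
        simp only [hdpKernel, hz, hz', or_self, if_false]
        rfl
      have hinner : ⟪z, z'⟫ = ‖z‖ * ‖z'‖ * t := by
        rw [htdef]
        field_simp
      have hnorm : ‖z - z'‖ ^ 2 = ‖z‖ ^ 2 - 2 * ⟪z, z'⟫ + ‖z'‖ ^ 2 := by
        rw [norm_sub_sq_real]
      rw [keyself z hz, keyself z' hz', hK, hnorm, hinner]
      nlinarith [sq_nonneg (‖z‖ - ‖z'‖), mul_pos ha hc,
        mul_nonneg (mul_pos ha hc).le (sub_nonneg.2 ht1),
        mul_le_mul_of_nonneg_left hκ2 (mul_pos ha hc).le,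
        mul_le_mul_of_nonneg_left hρL (mul_nonneg (mul_pos ha hc).le (sub_nonneg.2 ht1)),
        mul_le_mul_of_nonneg_left hρ1 (sq_nonneg (‖z‖ - ‖z'‖))]
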